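/- Let d be a positive integer and let m be a positive integer with m ≤ 2^{d/64}. If A_1, …, A_m are independent uniformly random points in {0,1}^d, then the probability that there exist distinct indices i, j with hammingDist(A_i, A_j) ≤ d/4 is at most 2^{−d/32}. -/

import Mathlib

open Finset

lemma myInnerSum (d : ℕ) (x : Fin d → Bool) :
    ∑ y : Fin d → Bool, ((3:ℝ)⁻¹) ^ hammingDist x y = (4/3 : ℝ) ^ d := by
  have h1 : ∀ y : Fin d → Bool,
      ((3:ℝ)⁻¹) ^ hammingDist x y = ∏ i, (if x i ≠ y i then (3:ℝ)⁻¹ else 1) := by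
    intro y
    rw [hammingDist, ← prod_filter, prod_const]
  simp_rw [h1]
  rw [← Fintype.prod_sum (fun i b => if x i ≠ b then (3:ℝ)⁻¹ else 1)]
  have : ∀ i : Fin d, ∑ b : Bool, (if x i ≠ b then (3:ℝ)⁻¹ else 1) = 4/3 := by
    intro i; cases hxi : x i <;> simp [Fintype.sum_bool, hxi] <;> norm_num
  simp_rw [this, prod_const, card_univ, Fintype.card_fin]

lemma myPairsCount (d : ℕ) :
    (((univ : Finset ((Fin d → Bool) × (Fin d → Bool))).filter
        (fun q => (hammingDist q.1 q.2 : ℝ) ≤ (d:ℝ)/4)).card : ℝ)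
      ≤ (2:ℝ)^d * ((3:ℝ) ^ ((d:ℝ)/4) * (4/3 : ℝ)^d) := by
  classical
  have key : ∀ q : (Fin d → Bool) × (Fin d → Bool),
      (hammingDist q.1 q.2 : ℝ) ≤ (d:ℝ)/4 →
      (1:ℝ) ≤ (3:ℝ) ^ ((d:ℝ)/4) * ((3:ℝ)⁻¹) ^ hammingDist q.1 q.2 := by
    intro q hq
    have : ((3:ℝ)⁻¹) ^ hammingDist q.1 q.2 = (3:ℝ) ^ (-(hammingDist q.1 q.2 : ℝ)) := by
      rw [Real.rpow_neg (by norm_num), Real.rpow_natCast, inv_pow]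
    rw [this, ← Real.rpow_add (by norm_num)]
    have h0 : (0:ℝ) ≤ (d:ℝ)/4 + -(hammingDist q.1 q.2 : ℝ) := by linarith
    calc (1:ℝ) = (3:ℝ) ^ (0:ℝ) := by rw [Real.rpow_zero]
      _ ≤ _ := Real.rpow_le_rpow_of_exponent_le (by norm_num) h0
  calc (((univ : Finset ((Fin d → Bool) × (Fin d → Bool))).filter
        (fun q => (hammingDist q.1 q.2 : ℝ) ≤ (d:ℝ)/4)).card : ℝ)
      = ∑ q ∈ (univ : Finset ((Fin d → Bool) × (Fin d → Bool))).filter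
          (fun q => (hammingDist q.1 q.2 : ℝ) ≤ (d:ℝ)/4), (1:ℝ) := by simp
    _ ≤ ∑ q ∈ (univ : Finset ((Fin d → Bool) × (Fin d → Bool))).filter
          (fun q => (hammingDist q.1 q.2 : ℝ) ≤ (d:ℝ)/4),
          (3:ℝ) ^ ((d:ℝ)/4) * ((3:ℝ)⁻¹) ^ hammingDist q.1 q.2 := by
        refine Finset.sum_le_sum ?_
        intro q hq
        exact key q (by simpa using (Finset.mem_filter.mp hq).2)
    _ ≤ ∑ q : (Fin d → Bool) × (Fin d → Bool),
          (3:ℝ) ^ ((d:ℝ)/4) * ((3:ℝ)⁻¹) ^ hammingDist q.1 q.2 := by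
        refine Finset.sum_le_sum_of_subset_of_nonneg (Finset.filter_subset _ _) ?_
        intro q _ _
        positivity
    _ = (2:ℝ)^d * ((3:ℝ) ^ ((d:ℝ)/4) * (4/3 : ℝ)^d) := by
        rw [Fintype.sum_prod_type]
        simp_rw [← Finset.mul_sum, myInnerSum]
        rw [Finset.sum_const, card_univ]
        simp [Fintype.card_fun, mul_comm]
        ring

lemma myPairInj (d m : ℕ) (i j : Fin m) (hij : i ≠ j) :
    ((univ : Finset (Fin m → (Fin d → Bool))).filter
       (fun A => (hammingDist (A i) (A j) : ℝ) ≤ (d:ℝ)/4)).card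
    ≤ ((univ : Finset ((Fin d → Bool) × (Fin d → Bool))).filter
        (fun q => (hammingDist q.1 q.2 : ℝ) ≤ (d:ℝ)/4)).card * (2^d) ^ (m-2) := by
  classical
  set X := Fin d → Bool
  set s := (univ : Finset ((Fin d → Bool) × (Fin d → Bool))).filter
        (fun q => (hammingDist q.1 q.2 : ℝ) ≤ (d:ℝ)/4) with hs
  have hcards : Fintype.card ({k : Fin m // k ≠ i ∧ k ≠ j} → X) = (2^d)^(m-2) := by
    rw [Fintype.card_fun]
    have hX : Fintype.card X = 2^d := by simp [X]
    have hsub : Fintype.card {k : Fin m // k ≠ i ∧ k ≠ j} = m - 2 := by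
      rw [Fintype.card_subtype]
      have : (univ : Finset (Fin m)).filter (fun k => k ≠ i ∧ k ≠ j)
          = univ \ {i, j} := by
        ext k; simp [and_comm]
      rw [this, card_sdiff_of_subset (by simp), card_univ, Fintype.card_fin,
        card_insert_of_notMem (by simpa using hij), card_singleton]
    rw [hX, hsub]
  have := Finset.card_le_card_of_injOn
    (f := fun A : Fin m → X => ((A i, A j), fun k : {k : Fin m // k ≠ i ∧ k ≠ j} => A k.1))
    (s := (univ : Finset (Fin m → X)).filter
       (fun A => (hammingDist (A i) (A j) : ℝ) ≤ (d:ℝ)/4))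
    (t := s ×ˢ (univ : Finset ({k : Fin m // k ≠ i ∧ k ≠ j} → X)))
    (by
      intro A hA
      simp only [Finset.mem_coe] at hA ⊢
      rw [Finset.mem_product]
      refine ⟨?_, mem_univ _⟩
      rw [hs, mem_filter]
      exact ⟨mem_univ _, by simpa using (mem_filter.mp hA).2⟩)
    (by
      intro A _ A' _ h
      simp only [Prod.mk.injEq] at h
      obtain ⟨⟨h1, h2⟩, h3⟩ := h
      funext k
      by_cases hki : k = i
      · subst hki; exact h1
      by_cases hkj : k = j
      · subst hkj; exact h2
      · exact congrFun h3 ⟨k, hki, hkj⟩)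
  calc _ ≤ (s ×ˢ (univ : Finset ({k : Fin m // k ≠ i ∧ k ≠ j} → X))).card := this
    _ = s.card * (2^d)^(m-2) := by rw [Finset.card_product, card_univ, hcards]

lemma myBase : (3:ℝ)^((1:ℝ)/4) * (4/3) ≤ (2:ℝ)^((15:ℝ)/16) := by
  have h16 : ((3:ℝ)^((1:ℝ)/4) * (4/3))^(16:ℕ) ≤ ((2:ℝ)^((15:ℝ)/16))^(16:ℕ) := by
    rw [mul_pow, ← Real.rpow_natCast ((3:ℝ)^((1:ℝ)/4)) 16,
      ← Real.rpow_natCast ((2:ℝ)^((15:ℝ)/16)) 16,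
      ← Real.rpow_mul (by norm_num : (0:ℝ) ≤ 3),
      ← Real.rpow_mul (by norm_num : (0:ℝ) ≤ 2)]
    norm_num
  exact le_of_pow_le_pow_left₀ (by norm_num) (by positivity) h16

/-- If `m ≤ 2^(d/64)` points `A_1, …, A_m` are chosen independently and uniformly at
random from `{0,1}^d`, then the probability (here expressed as a ratio of counts, since
the `m` independent uniform points form a uniform point of the product space) that some
two distinct points are at Hamming distance at most `d/4` is at most `2^(−d/32)`. -/
theorem random_anchors_far_apart (d m : ℕ) (hd : 0 < d) (hm : 0 < m)
    (hm64 : (m : ℝ) ≤ (2 : ℝ) ^ ((d : ℝ) / 64)) :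
    ({A : Fin m → (Fin d → Bool) |
        ∃ i j : Fin m, i ≠ j ∧ (hammingDist (A i) (A j) : ℝ) ≤ (d : ℝ) / 4}.ncard : ℝ) /
      ((2 : ℝ) ^ d) ^ m ≤ (2 : ℝ) ^ (-(d : ℝ) / 32) := by
  classical
  set X := Fin d → Bool
  -- the bad set as a finset
  have h0 : ({A : Fin m → (Fin d → Bool) |
      ∃ i j : Fin m, i ≠ j ∧ (hammingDist (A i) (A j) : ℝ) ≤ (d : ℝ) / 4}).ncard
      = ((univ : Finset (Fin m → X)).filter
          (fun A => ∃ i j : Fin m, i ≠ j ∧ (hammingDist (A i) (A j) : ℝ) ≤ (d:ℝ)/4)).card := by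
    rw [← Set.ncard_coe_finset]
    congr 1
    ext A
    simp
    exact Iff.rfl
  rcases eq_or_lt_of_le (show 1 ≤ m from hm) with hm1 | hm2
  · -- m = 1 : no two distinct indices exist
    have hempty : ((univ : Finset (Fin m → X)).filter
        (fun A => ∃ i j : Fin m, i ≠ j ∧ (hammingDist (A i) (A j) : ℝ) ≤ (d:ℝ)/4)) = ∅ := by
      rw [Finset.filter_eq_empty_iff]
      intro A _
      rintro ⟨i, j, hij, -⟩
      subst hm1
      exact hij (Subsingleton.elim i j)
    rw [h0, hempty]
    simp only [Finset.card_empty, Nat.cast_zero, zero_div]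
    positivity
  -- now 2 ≤ m
  have hm2' : 2 ≤ m := hm2
  set N := ((univ : Finset ((Fin d → Bool) × (Fin d → Bool))).filter
        (fun q => (hammingDist q.1 q.2 : ℝ) ≤ (d:ℝ)/4)).card with hN
  -- union bound (natural numbers)
  have hkey : ((univ : Finset (Fin m → X)).filter
      (fun A => ∃ i j : Fin m, i ≠ j ∧ (hammingDist (A i) (A j) : ℝ) ≤ (d:ℝ)/4)).card
      ≤ m^2 * (N * (2^d)^(m-2)) := by
    have hsub : ((univ : Finset (Fin m → X)).filter
        (fun A => ∃ i j : Fin m, i ≠ j ∧ (hammingDist (A i) (A j) : ℝ) ≤ (d:ℝ)/4))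
        ⊆ ((univ : Finset (Fin m × Fin m)).filter (fun p => p.1 ≠ p.2)).biUnion
            (fun p => (univ : Finset (Fin m → X)).filter
              (fun A => (hammingDist (A p.1) (A p.2) : ℝ) ≤ (d:ℝ)/4)) := by
      intro A hA
      obtain ⟨i, j, hij, hdist⟩ := (mem_filter.mp hA).2
      exact Finset.mem_biUnion.mpr ⟨(i, j), by simp [hij], by simp [hdist]⟩
    calc _ ≤ (((univ : Finset (Fin m × Fin m)).filter (fun p => p.1 ≠ p.2)).biUnion
            (fun p => (univ : Finset (Fin m → X)).filter
              (fun A => (hammingDist (A p.1) (A p.2) : ℝ) ≤ (d:ℝ)/4))).card :=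
          Finset.card_le_card hsub
      _ ≤ ∑ p ∈ (univ : Finset (Fin m × Fin m)).filter (fun p => p.1 ≠ p.2),
            ((univ : Finset (Fin m → X)).filter
              (fun A => (hammingDist (A p.1) (A p.2) : ℝ) ≤ (d:ℝ)/4)).card :=
          Finset.card_biUnion_le
      _ ≤ ∑ _p ∈ (univ : Finset (Fin m × Fin m)).filter (fun p => p.1 ≠ p.2),
            N * (2^d)^(m-2) := by
          refine Finset.sum_le_sum ?_
          intro p hp
          exact myPairInj d m p.1 p.2 (mem_filter.mp hp).2
      _ = ((univ : Finset (Fin m × Fin m)).filter (fun p => p.1 ≠ p.2)).card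
            * (N * (2^d)^(m-2)) := by rw [Finset.sum_const, smul_eq_mul]
      _ ≤ m^2 * (N * (2^d)^(m-2)) := by
          refine Nat.mul_le_mul_right _ ?_
          calc _ ≤ (univ : Finset (Fin m × Fin m)).card := Finset.card_le_card
                (Finset.filter_subset _ _)
            _ = m^2 := by simp [sq]
  -- move to the reals
  rw [h0, div_le_iff₀ (by positivity)]
  have hNle : (N:ℝ) ≤ (2:ℝ)^d * ((3:ℝ) ^ ((d:ℝ)/4) * (4/3 : ℝ)^d) := myPairsCount d
  have hm2le : (m:ℝ)^2 ≤ (2:ℝ)^((d:ℝ)/32) := by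
    calc (m:ℝ)^2 ≤ ((2:ℝ)^((d:ℝ)/64))^2 := by
          exact pow_le_pow_left₀ (by positivity) hm64 2
      _ = (2:ℝ)^((d:ℝ)/32) := by
          rw [← Real.rpow_natCast ((2:ℝ)^((d:ℝ)/64)) 2, ← Real.rpow_mul (by norm_num)]
          norm_num
          ring_nf
  have hT : (3:ℝ)^((d:ℝ)/4) * (4/3:ℝ)^d ≤ (2:ℝ)^((15:ℝ)*(d:ℝ)/16) := by
    have h1 : (3:ℝ)^((d:ℝ)/4) = ((3:ℝ)^((1:ℝ)/4))^d := by
      rw [← Real.rpow_natCast ((3:ℝ)^((1:ℝ)/4)) d, ← Real.rpow_mul (by norm_num)]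
      ring_nf
    have h2 : (2:ℝ)^((15:ℝ)*(d:ℝ)/16) = ((2:ℝ)^((15:ℝ)/16))^d := by
      rw [← Real.rpow_natCast ((2:ℝ)^((15:ℝ)/16)) d, ← Real.rpow_mul (by norm_num)]
      ring_nf
    rw [h1, h2, ← mul_pow]
    exact pow_le_pow_left₀ (by positivity) myBase d
  -- exponent bookkeeping
  have hsplit : ((2:ℝ)^d)^m = ((2:ℝ)^d)^(m-2) * ((2:ℝ)^d)^2 := by
    rw [← pow_add]
    congr 1
    exact (Nat.sub_add_cancel hm2').symm
  have hdpow : ((2:ℝ)^d) = (2:ℝ)^((d:ℝ)) := by rw [Real.rpow_natCast]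
  have hcomb : (2:ℝ)^((d:ℝ)/32) * ((2:ℝ)^d * (2:ℝ)^((15:ℝ)*(d:ℝ)/16))
      = (2:ℝ)^(-(d:ℝ)/32) * ((2:ℝ)^d)^2 := by
    have : ((2:ℝ)^d)^2 = (2:ℝ)^((2:ℝ)*(d:ℝ)) := by
      rw [hdpow, ← Real.rpow_natCast ((2:ℝ)^((d:ℝ))) 2, ← Real.rpow_mul (by norm_num)]
      ring_nf
    rw [this, hdpow, ← Real.rpow_add (by norm_num), ← Real.rpow_add (by norm_num),
      ← Real.rpow_add (by norm_num)]
    congr 1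
    ring
  calc (((univ : Finset (Fin m → X)).filter
      (fun A => ∃ i j : Fin m, i ≠ j ∧ (hammingDist (A i) (A j) : ℝ) ≤ (d:ℝ)/4)).card : ℝ)
      ≤ (m:ℝ)^2 * ((N:ℝ) * ((2:ℝ)^d)^(m-2)) := by
        have := hkey
        exact_mod_cast Nat.cast_le.mpr this |>.trans_eq (by push_cast; ring)
    _ ≤ (m:ℝ)^2 * (((2:ℝ)^d * ((3:ℝ) ^ ((d:ℝ)/4) * (4/3 : ℝ)^d)) * ((2:ℝ)^d)^(m-2)) := by
        gcongr
    _ ≤ (2:ℝ)^((d:ℝ)/32) * (((2:ℝ)^d * (2:ℝ)^((15:ℝ)*(d:ℝ)/16)) * ((2:ℝ)^d)^(m-2)) := by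
        gcongr
    _ = ((2:ℝ)^((d:ℝ)/32) * ((2:ℝ)^d * (2:ℝ)^((15:ℝ)*(d:ℝ)/16))) * ((2:ℝ)^d)^(m-2) := by
        ring
    _ = ((2:ℝ)^(-(d:ℝ)/32) * ((2:ℝ)^d)^2) * ((2:ℝ)^d)^(m-2) := by rw [hcomb]
    _ = (2:ℝ)^(-(d:ℝ)/32) * ((2:ℝ)^d)^m := by rw [hsplit]; ring
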